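/- Let B ≥ 2 be an integer base and k ≥ 1. If (a, b, c) is a digit-block triple with property P*_k, then 2a < B^k; consequently the leading base-B digit a₁ of a satisfies 2·a₁ < B. -/

import Mathlib

set_option maxHeartbeats 1600000 in
/-- For a nontrivial solution of `P*_k`, the leading block satisfies
`2a < B^k`, and consequently the leading digit `a₁ = a / B^{k−1}` satisfies
`2·a₁ < B`. -/
theorem stmt_15 (B k a b c : ℕ) (hB : 2 ≤ B) (hk : 1 ≤ k)
    (ha₁ : B ^ (k - 1) ≤ a) (ha₂ : a < B ^ k) (hb : b < B) (hc : c < B ^ k)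
    (hP : (a * B + b) * c = a * (b * B ^ k + c))
    (hz : ¬(a = 0 ∧ b = 0) ∧ ¬(a = 0 ∧ c = 0) ∧ ¬(b = 0 ∧ c = 0))
    (hne : ¬(a = b * ((B ^ k - 1) / (B - 1)) ∧ c = b * ((B ^ k - 1) / (B - 1)))) :
    2 * a < B ^ k ∧ 2 * (a / B ^ (k - 1)) < B := by
  have hBk : 1 ≤ B ^ k := Nat.one_le_pow _ _ (by omega)
  have ha0 : 1 ≤ a := le_trans (Nat.one_le_pow _ _ (by omega)) ha₁
  have hb0 : 1 ≤ b := by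
    rcases Nat.eq_zero_or_pos b with hb' | hb'
    · exfalso
      subst hb'
      rcases Nat.eq_zero_or_pos c with hc' | hc'
      · exact hz.2.2 ⟨rfl, hc'⟩
      · have h1 : a * c * B = a * c * 1 := by linear_combination hP
        have h2 : 0 < a * c := Nat.mul_pos ha0 hc'
        have := Nat.eq_of_mul_eq_mul_left h2 (by linarith [h1] : a * c * B = a * c * 1)
        omega
    · exact hb'
  have hc0 : 1 ≤ c := by
    rcases Nat.eq_zero_or_pos c with hc' | hc'
    · exfalso
      subst hc'
      have h1 : a * (b * B ^ k) = 0 := by linear_combination hP.symm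
      have : a = 0 ∨ b = 0 ∨ B ^ k = 0 := by
        rcases Nat.mul_eq_zero.mp h1 with h | h
        · exact Or.inl h
        · rcases Nat.mul_eq_zero.mp h with h | h
          · exact Or.inr (Or.inl h)
          · exact Or.inr (Or.inr h)
      omega
    · exact hc'
  -- integer versions
  have hPZ : ((a : ℤ) * B + b) * c = a * (b * B ^ k + c) := by exact_mod_cast hP
  have key : (c : ℤ) * (a * (B - 1) + b) = a * b * B ^ k := by linear_combination hPZ
  set D : ℤ := (a : ℤ) * (B - 1) + b with hDdef
  set E : ℤ := (b : ℤ) * B ^ k - c * (B - 1) with hEdef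
  have hBZ : (2 : ℤ) ≤ B := by exact_mod_cast hB
  have hBkZ : (1 : ℤ) ≤ (B : ℤ) ^ k := by exact_mod_cast hBk
  have hbZ : (1 : ℤ) ≤ b := by exact_mod_cast hb0
  have hbB : (b : ℤ) ≤ B - 1 := by
    have : (b : ℤ) < B := by exact_mod_cast hb
    linarith
  have haZ : (1 : ℤ) ≤ a := by exact_mod_cast ha0
  have hcZ : (1 : ℤ) ≤ c := by exact_mod_cast hc0
  have hDE : D * E = (b : ℤ) ^ 2 * B ^ k := by
    rw [hDdef, hEdef]; linear_combination (1 - (B : ℤ)) * key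
  have hDpos : 0 < D := by
    have h1 : (1 : ℤ) * 1 ≤ (a : ℤ) * (B - 1) :=
      mul_le_mul haZ (by linarith) (by norm_num) (by linarith)
    rw [hDdef]; linarith
  have hb2pos : (0 : ℤ) < (b : ℤ) ^ 2 * B ^ k := by
    have h1 : (0 : ℤ) < (b : ℤ) ^ 2 := by positivity
    have h2 : (0 : ℤ) < (B : ℤ) ^ k := by linarith
    exact mul_pos h1 h2
  have hEpos : 1 ≤ E := by
    by_contra hE
    push_neg at hE
    have hE0 : E ≤ 0 := by omega
    have : D * E ≤ 0 := mul_nonpos_of_nonneg_of_nonpos hDpos.le hE0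
    rw [hDE] at this
    linarith
  have h2a : 2 * a < B ^ k := by
    by_contra h
    push_neg at h
    have hZ : (B : ℤ) ^ k ≤ 2 * a := by exact_mod_cast h
    have hDbig : (B : ℤ) ^ k * (B - 1) + 2 * b ≤ 2 * D := by
      have h1 : (B : ℤ) ^ k * (B - 1) ≤ 2 * a * (B - 1) :=
        mul_le_mul_of_nonneg_right hZ (by linarith)
      rw [hDdef]; linarith
    -- E ≡ b mod (B-1)
    have hdvd : ((B : ℤ) - 1) ∣ (E - b) := by
      have h1 : ((B : ℤ) - 1) ∣ ((B : ℤ) ^ k - 1 ^ k) := sub_dvd_pow_sub_pow _ _ k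
      simp only [one_pow] at h1
      obtain ⟨t, ht⟩ := h1
      exact ⟨b * t - c, by rw [hEdef]; linear_combination (b : ℤ) * ht⟩
    obtain ⟨m, hm⟩ := hdvd
    have hm0 : 0 ≤ m := by
      by_contra hm'
      push_neg at hm'
      have h1 : m ≤ -1 := by omega
      have h2 : ((B : ℤ) - 1) * m ≤ ((B : ℤ) - 1) * (-1) :=
        mul_le_mul_of_nonneg_left h1 (by linarith)
      linarith
    rcases eq_or_lt_of_le hm0 with hmz | hmp
    · -- m = 0 : trivial solution, contradiction with hne
      have hEb : E = b := by rw [show E = (b : ℤ) + (B - 1) * m from by linarith, ← hmz]; ring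
      have hDval : D = (b : ℤ) * B ^ k := by
        have h1 : D * E = ((b : ℤ) * B ^ k) * b := by rw [hDE]; ring
        rw [hEb] at h1
        exact mul_right_cancel₀ (by linarith) h1
      have haeqZ : (a : ℤ) * (B - 1) = b * (B ^ k - 1) := by
        rw [hDdef] at hDval; linear_combination hDval
      have hceqZ : (c : ℤ) * (B - 1) = b * (B ^ k - 1) := by
        rw [hEdef] at hEb; linear_combination -hEb
      have haeq : a * (B - 1) = b * (B ^ k - 1) := by
        zify [show 1 ≤ B from by omega, hBk]; exact haeqZ
      have hceq : c * (B - 1) = b * (B ^ k - 1) := by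
        zify [show 1 ≤ B from by omega, hBk]; exact hceqZ
      have hdvdN : (B - 1) ∣ (B ^ k - 1) := by
        simpa using Nat.sub_dvd_pow_sub_pow B 1 k
      obtain ⟨t, ht⟩ := hdvdN
      have htq : (B ^ k - 1) / (B - 1) = t := by
        rw [ht]; exact Nat.mul_div_cancel_left t (by omega)
      have hB1pos : 0 < B - 1 := by omega
      have ha' : a = b * t := by
        refine Nat.eq_of_mul_eq_mul_right hB1pos ?_
        rw [haeq, ht]; ring
      have hc' : c = b * t := by
        refine Nat.eq_of_mul_eq_mul_right hB1pos ?_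
        rw [hceq, ht]; ring
      exact hne ⟨by rw [htq, ← ha'], by rw [htq, ← hc']⟩
    · -- m ≥ 1 : E ≥ b + (B-1), size contradiction
      have hm1 : 1 ≤ m := hmp
      have hEbig : (b : ℤ) + (B - 1) ≤ E := by
        have h1 : ((B : ℤ) - 1) * 1 ≤ ((B : ℤ) - 1) * m :=
          mul_le_mul_of_nonneg_left hm1 (by linarith)
        linarith
      have s1 : ((B : ℤ) ^ k * (B - 1) + 2 * b) * E ≤ (2 * D) * E :=
        mul_le_mul_of_nonneg_right hDbig (by linarith)
      have s2 : ((B : ℤ) ^ k * (B - 1)) * ((b : ℤ) + (B - 1)) ≤ ((B : ℤ) ^ k * (B - 1)) * E := by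
        refine mul_le_mul_of_nonneg_left hEbig ?_
        have : (0 : ℤ) < (B : ℤ) ^ k := by linarith
        nlinarith
      have s3 : 2 * (b : ℤ) ^ 2 ≤ ((B : ℤ) - 1) * ((b : ℤ) + (B - 1)) := by
        nlinarith [mul_nonneg (by linarith : (0:ℤ) ≤ (B : ℤ) - 1 - b) (by linarith : (0:ℤ) ≤ (B : ℤ) - 1 + 2 * b)]
      have s4 : (B : ℤ) ^ k * (2 * (b : ℤ) ^ 2) ≤ (B : ℤ) ^ k * (((B : ℤ) - 1) * ((b : ℤ) + (B - 1))) :=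
        mul_le_mul_of_nonneg_left s3 (by linarith)
      have s5 : 2 * (b : ℤ) * 1 ≤ 2 * (b : ℤ) * E :=
        mul_le_mul_of_nonneg_left hEpos (by linarith)
      linarith [s1, s2, s4, s5, hDE, hbZ]
  refine ⟨h2a, ?_⟩
  have hmk : B ^ (k - 1) * B = B ^ k := by
    rw [← pow_succ]; congr 1; omega
  have hmpos : 0 < B ^ (k - 1) := Nat.pow_pos (by omega)
  have h1 : 2 * (a / B ^ (k - 1)) * B ^ (k - 1) < B * B ^ (k - 1) := by
    calc 2 * (a / B ^ (k - 1)) * B ^ (k - 1) = 2 * (a / B ^ (k - 1) * B ^ (k - 1)) := by ring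
    _ ≤ 2 * a := by
        have := Nat.div_mul_le_self a (B ^ (k - 1))
        omega
    _ < B ^ k := h2a
    _ = B * B ^ (k - 1) := by rw [← hmk]; ring
  exact Nat.lt_of_mul_lt_mul_right h1
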